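/- Any simple directed path from x to y in H can be decomposed into subpaths P₁, ..., P_L with L ≤ |V(H)| such that each Pᵢ has all its vertices in Uᵢ ∪ V(C) for a single connected component Uᵢ of H ⊖ C, and consecutive subpaths either share their endpoint (which is then a vertex of C) or are joined by an edge of H that crosses some edge of C. -/

import Mathlib

/-- An edge of `H ⊖ C`. -/
def sepEdge {V : Type*} (E : V → V → Prop) (cross : V → V → V → V → Prop)
    (CV : Set V) (CE : Set (V × V)) (u v : V) : Prop :=
  E u v ∧ u ∉ CV ∧ v ∉ CV ∧ ∀ f ∈ CE, ¬ cross u v f.1 f.2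

/-- Connectivity (underlying undirected) in `H ⊖ C`. -/
def sepReach {V : Type*} (E : V → V → Prop) (cross : V → V → V → V → Prop)
    (CV : Set V) (CE : Set (V × V)) : V → V → Prop :=
  Relation.ReflTransGen (fun u v => sepEdge E cross CV CE u v ∨ sepEdge E cross CV CE v u)

/-- Glue a list of subpaths together, merging a shared endpoint of consecutive subpaths. -/
def glue {α : Type*} [DecidableEq α] : List (List α) → List α
  | [] => []
  | [P] => P
  | P :: Q :: rest =>
      let g := glue (Q :: rest)
      P ++ (if P.getLast? = g.head? then g.tail else g)

section Aux

variable {V : Type*} [DecidableEq V] {E : V → V → Prop} {cross : V → V → V → V → Prop}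
  {CV : Set V} {CE : Set (V × V)}

lemma sepReach_symm {u v : V} (h : sepReach E cross CV CE u v) :
    sepReach E cross CV CE v u :=
  haveI : Std.Symm (fun u v : V => sepEdge E cross CV CE u v ∨ sepEdge E cross CV CE v u) :=
    ⟨fun _ _ hh => hh.symm⟩
  Std.Symm.symm (self := Relation.ReflTransGen.stdSymm) _ _ h

lemma glue_cons_cons {α : Type*} [DecidableEq α] (P Q : List α) (r : List (List α)) :
    glue (P :: Q :: r) =
      P ++ (if P.getLast? = (glue (Q :: r)).head? then (glue (Q :: r)).tail
            else glue (Q :: r)) := rfl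

lemma glue_cons_of_ne {α : Type*} [DecidableEq α] (a : α) {P : List α} (hP : P ≠ [])
    (r : List (List α)) : glue ((a :: P) :: r) = a :: glue (P :: r) := by
  obtain ⟨x, xs, rfl⟩ := List.exists_cons_of_ne_nil hP
  cases r with
  | nil => simp [glue]
  | cons Q r =>
      rw [glue_cons_cons, glue_cons_cons, List.getLast?_cons_cons, List.cons_append]

/-- Key decomposition lemma, by induction on the path. -/
lemma decompose (l : List V) (hl : l ≠ []) (hchain : List.Chain' E l) (hnodup : l.Nodup) :
    ∃ (P0 : List V) (Ps' : List (List V)),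
      P0.head? = l.head? ∧
      (∀ P ∈ P0 :: Ps', P ≠ []) ∧
      (P0 :: Ps').length ≤ l.length ∧
      glue (P0 :: Ps') = l ∧
      (∀ P ∈ P0 :: Ps', List.Chain' E P ∧
        ∃ u₀ : V, ∀ z ∈ P, z ∈ CV ∨ sepReach E cross CV CE u₀ z) ∧
      (∃ u₀ : V, (∀ h, P0.head? = some h → (h ∈ CV ∨ sepReach E cross CV CE u₀ h)) ∧
        ∀ z ∈ P0, z ∈ CV ∨ sepReach E cross CV CE u₀ z) ∧
      List.Chain'
        (fun P Q =>
          (P.getLast? = Q.head? ∧ ∃ c, P.getLast? = some c ∧ c ∈ CV) ∨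
          (∃ a b : V, P.getLast? = some a ∧ Q.head? = some b ∧ E a b ∧
            ∃ f ∈ CE, cross a b f.1 f.2))
        (P0 :: Ps') := by
  induction l with
  | nil => exact absurd rfl hl
  | cons a t ih =>
    cases t with
    | nil =>
        refine ⟨[a], [], rfl, by simp, by simp, by simp [glue], ?_, ⟨a, ?_, ?_⟩, List.isChain_singleton _⟩
        · intro P hP
          simp only [List.mem_singleton] at hP
          subst hP
          refine ⟨List.isChain_singleton _, a, ?_⟩
          intro z hz
          simp at hz
          subst hz
          exact Or.inr Relation.ReflTransGen.refl
        · intro h hh; simp at hh; subst hh; exact Or.inr Relation.ReflTransGen.refl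
        · intro z hz; simp at hz; subst hz; exact Or.inr Relation.ReflTransGen.refl
    | cons b rest =>
        simp only [List.Chain', List.isChain_cons_cons] at hchain
        obtain ⟨hEab, hchaint⟩ := hchain
        rw [List.nodup_cons] at hnodup
        obtain ⟨hat, hnodupt⟩ := hnodup
        obtain ⟨P0, Ps', hhead, hne, hlen, hglue, hmem, ⟨u₀, hu₀h, hu₀⟩, hchR⟩ :=
          ih (List.cons_ne_nil _ _) hchaint hnodupt
        have hP0ne : P0 ≠ [] := hne _ (List.mem_cons_self)
        have hP0head : P0.head? = some b := by simpa using hhead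
        -- the "prepend a to the first subpath" case
        have prepend : (a ∈ CV ∨ sepEdge E cross CV CE a b) →
            ∃ (Q0 : List V) (Qs' : List (List V)),
              Q0.head? = (a :: b :: rest).head? ∧
              (∀ P ∈ Q0 :: Qs', P ≠ []) ∧
              (Q0 :: Qs').length ≤ (a :: b :: rest).length ∧
              glue (Q0 :: Qs') = a :: b :: rest ∧
              (∀ P ∈ Q0 :: Qs', List.Chain' E P ∧
                ∃ u₀ : V, ∀ z ∈ P, z ∈ CV ∨ sepReach E cross CV CE u₀ z) ∧
              (∃ u₀ : V, (∀ h, Q0.head? = some h → (h ∈ CV ∨ sepReach E cross CV CE u₀ h)) ∧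
                ∀ z ∈ Q0, z ∈ CV ∨ sepReach E cross CV CE u₀ z) ∧
              List.Chain'
                (fun P Q =>
                  (P.getLast? = Q.head? ∧ ∃ c, P.getLast? = some c ∧ c ∈ CV) ∨
                  (∃ a b : V, P.getLast? = some a ∧ Q.head? = some b ∧ E a b ∧
                    ∃ f ∈ CE, cross a b f.1 f.2)) (Q0 :: Qs') := by
          intro hab
          -- a new `u₀` that works for `a :: P0`
          have hnew : ∃ w : V, ∀ z ∈ a :: P0, z ∈ CV ∨ sepReach E cross CV CE w z := by
            rcases hab with ha | hsep
            · refine ⟨u₀, ?_⟩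
              intro z hz
              rcases List.mem_cons.mp hz with rfl | hz
              · exact Or.inl ha
              · exact hu₀ z hz
            · refine ⟨a, ?_⟩
              have hbu : sepReach E cross CV CE a b :=
                Relation.ReflTransGen.single (Or.inl hsep)
              have hub : sepReach E cross CV CE u₀ b := by
                rcases hu₀h b hP0head with hb | h
                · exact absurd hb hsep.2.2.1
                · exact h
              have hau : sepReach E cross CV CE a u₀ := hbu.trans (sepReach_symm hub)
              intro z hz
              rcases List.mem_cons.mp hz with rfl | hz
              · exact Or.inr Relation.ReflTransGen.refl
              · rcases hu₀ z hz with h | h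
                · exact Or.inl h
                · exact Or.inr (hau.trans h)
          obtain ⟨w, hw⟩ := hnew
          refine ⟨a :: P0, Ps', rfl, ?_, ?_, ?_, ?_, ⟨w, ?_, hw⟩, ?_⟩
          · intro P hP
            rcases List.mem_cons.mp hP with rfl | hP
            · exact List.cons_ne_nil _ _
            · exact hne _ (List.mem_cons_of_mem _ hP)
          · simpa using Nat.le_succ_of_le hlen
          · rw [glue_cons_of_ne a hP0ne, hglue]
          · intro P hP
            rcases List.mem_cons.mp hP with rfl | hP
            · refine ⟨?_, w, hw⟩
              simp only [List.Chain', List.isChain_cons]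
              refine ⟨?_, (hmem _ (List.mem_cons_self)).1⟩
              intro h hh
              rw [hP0head] at hh
              simp at hh
              subst hh
              exact hEab
            · exact hmem _ (List.mem_cons_of_mem _ hP)
          · intro h hh
            simp only [List.head?_cons, Option.some.injEq] at hh
            subst hh
            exact (hw a (List.mem_cons_self))
          · -- chain between subpaths is preserved
            cases Ps' with
            | nil => exact List.isChain_singleton _
            | cons Q r =>
                simp only [List.Chain', List.isChain_cons_cons] at hchR ⊢
                refine ⟨?_, hchR.2⟩
                obtain ⟨x, xs, rfl⟩ := List.exists_cons_of_ne_nil hP0ne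
                rw [List.getLast?_cons_cons]
                exact hchR.1
        by_cases hb : b ∈ CV
        · by_cases hr : rest = []
          · -- l = [a, b] with b ∈ CV : take a single subpath [a,b]
            subst hr
            refine ⟨[a, b], [], rfl, by simp, by simp, by simp [glue], ?_, ⟨a, ?_, ?_⟩, List.isChain_singleton _⟩
            · intro P hP
              simp only [List.mem_singleton] at hP
              subst hP
              refine ⟨List.isChain_pair.mpr hEab, a, ?_⟩
              intro z hz
              rcases List.mem_cons.mp hz with rfl | hz
              · exact Or.inr Relation.ReflTransGen.refl
              · simp at hz; subst hz; exact Or.inl hb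
            · intro h hh; simp at hh; subst hh; exact Or.inr Relation.ReflTransGen.refl
            · intro z hz
              rcases List.mem_cons.mp hz with rfl | hz
              · exact Or.inr Relation.ReflTransGen.refl
              · simp at hz; subst hz; exact Or.inl hb
          · -- shared split at the interior C-vertex b
            refine ⟨[a, b], P0 :: Ps', rfl, ?_, ?_, ?_, ?_, ⟨a, ?_, ?_⟩, ?_⟩
            · intro P hP
              rcases List.mem_cons.mp hP with rfl | hP
              · exact List.cons_ne_nil _ _
              · exact hne _ hP
            · simpa using Nat.succ_le_succ hlen
            · rw [glue_cons_cons, hglue]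
              have : ([a, b].getLast? = (b :: rest).head?) := by simp
              rw [if_pos this]
              simp
            · intro P hP
              rcases List.mem_cons.mp hP with rfl | hP
              · refine ⟨List.isChain_pair.mpr hEab, a, ?_⟩
                intro z hz
                rcases List.mem_cons.mp hz with rfl | hz
                · exact Or.inr Relation.ReflTransGen.refl
                · simp at hz; subst hz; exact Or.inl hb
              · exact hmem _ hP
            · intro h hh; simp at hh; subst hh; exact Or.inr Relation.ReflTransGen.refl
            · intro z hz
              rcases List.mem_cons.mp hz with rfl | hz
              · exact Or.inr Relation.ReflTransGen.refl
              · simp at hz; subst hz; exact Or.inl hb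
            · simp only [List.Chain', List.isChain_cons_cons]
              refine ⟨Or.inl ⟨?_, b, by simp, hb⟩, hchR⟩
              simp [hP0head]
        · by_cases ha : a ∈ CV
          · exact prepend (Or.inl ha)
          · by_cases hcr : ∃ f ∈ CE, cross a b f.1 f.2
            · -- crossing split between a and b
              refine ⟨[a], P0 :: Ps', rfl, ?_, ?_, ?_, ?_, ⟨a, ?_, ?_⟩, ?_⟩
              · intro P hP
                rcases List.mem_cons.mp hP with rfl | hP
                · exact List.cons_ne_nil _ _
                · exact hne _ hP
              · simp only [List.length_cons] at hlen ⊢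
                omega
              · rw [glue_cons_cons, hglue]
                have hab : a ≠ b := by
                  intro h; subst h; exact hat (List.mem_cons_self)
                have : ¬ ([a].getLast? = (b :: rest).head?) := by
                  simp [hab]
                rw [if_neg this]
                simp
              · intro P hP
                rcases List.mem_cons.mp hP with rfl | hP
                · refine ⟨List.isChain_singleton _, a, ?_⟩
                  intro z hz
                  simp at hz
                  subst hz
                  exact Or.inr Relation.ReflTransGen.refl
                · exact hmem _ hP
              · intro h hh; simp at hh; subst hh; exact Or.inr Relation.ReflTransGen.refl
              · intro z hz; simp at hz; subst hz; exact Or.inr Relation.ReflTransGen.refl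
              · simp only [List.Chain', List.isChain_cons_cons]
                exact ⟨Or.inr ⟨a, b, by simp, hP0head, hEab, hcr⟩, hchR⟩
            · -- sepEdge: keep in the same component
              refine prepend (Or.inr ⟨hEab, ha, hb, ?_⟩)
              intro f hf hc
              exact hcr ⟨f, hf, hc⟩

end Aux

/-- any simple directed path `p` from `x` to `y` in `H` decomposes into
subpaths `P₁, …, P_L` with `L ≤ |V(H)|` such that each `Pᵢ` has all its vertices in
`Uᵢ ∪ V(C)` for a single connected component `Uᵢ` of `H ⊖ C`, and consecutive subpaths
either share their endpoint — which then is a vertex of `C` — or are joined by an edge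
of `H` that crosses some edge of `C`. -/
theorem stmt_12 {V : Type*} [Fintype V] [DecidableEq V]
    (E : V → V → Prop) (cross : V → V → V → V → Prop)
    (CV : Set V) (CE : Set (V × V)) (hCE : ∀ f ∈ CE, E f.1 f.2)
    (p : List V) (x y : V)
    (hne : p ≠ []) (hhead : p.head? = some x) (hlast : p.getLast? = some y)
    (hchain : List.Chain' E p) (hnodup : p.Nodup) :
    ∃ Ps : List (List V),
      Ps ≠ [] ∧ (∀ P ∈ Ps, P ≠ []) ∧ Ps.length ≤ Fintype.card V ∧ glue Ps = p ∧
      (∀ P ∈ Ps, List.Chain' E P ∧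
        ∃ u₀ : V, ∀ z ∈ P, z ∈ CV ∨ sepReach E cross CV CE u₀ z) ∧
      List.Chain'
        (fun P Q =>
          (P.getLast? = Q.head? ∧ ∃ c, P.getLast? = some c ∧ c ∈ CV) ∨
          (∃ a b : V, P.getLast? = some a ∧ Q.head? = some b ∧ E a b ∧
            ∃ f ∈ CE, cross a b f.1 f.2))
        Ps := by
  obtain ⟨P0, Ps', _, hne', hlen, hglue, hmem, _, hchR⟩ :=
    decompose (E := E) (cross := cross) (CV := CV) (CE := CE) p hne hchain hnodup
  exact ⟨P0 :: Ps', List.cons_ne_nil _ _, hne', hlen.trans hnodup.length_le_card,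
    hglue, hmem, hchR⟩
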